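/- arXiv:1010.2809 — 2 statements merged into one kernel-verified Lean document; each statement's English description precedes it below -/
import Mathlib

section
/- Let F be a piecewise smooth map on the circle S^1, smooth on three pairwise disjoint open intervals I1, I2, I3 whose closures cover S^1. Suppose |F'| ≥ a > 1 on I1, |F'| ≥ b > 0 on I2 with ln(a) > |ln(b)|, and F' = 1 on I3. If F(I2) ⊂ I3, F(I3) ∩ I2 = ∅, and F(I3) ≠ I3, then for every θ0 whose forward orbit avoids the (finitely many) interval endpoints and for which the Lyapunov exponent λ(θ0) = lim_{N→∞} (1/N) Σ_{n=0}^{N} ln|F'(F^n(θ0))| exists, one has λ(θ0) > 0. -/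
/-- Positive-Lyapunov lemma. The circle is modeled as `[0,1]` (with
endpoints identified); `F` maps `[0,1]` to itself, is differentiable on the three
pairwise disjoint open intervals `I1, I2, I3` whose closures cover `[0,1]`, with
`|F'| ≥ a > 1` on `I1`, `|F'| ≥ b > 0` on `I2`, `ln a > |ln b|`, `F' = 1` on `I3`,
`F(I2) ⊆ I3`, `F(I3) ∩ I2 = ∅`, `F(I3) ≠ I3`. Then any orbit avoiding the interval
endpoints whose Lyapunov exponent exists has a strictly positive exponent. -/
theorem stmt_0 (F : ℝ → ℝ) (I1 I2 I3 : Set ℝ) (a b : ℝ)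
    (hmaps : Set.MapsTo F (Set.Icc 0 1) (Set.Icc 0 1))
    (hopen1 : ∃ p q : ℝ, p < q ∧ I1 = Set.Ioo p q)
    (hopen2 : ∃ p q : ℝ, p < q ∧ I2 = Set.Ioo p q)
    (hopen3 : ∃ p q : ℝ, p < q ∧ I3 = Set.Ioo p q)
    (hdisj12 : Disjoint I1 I2) (hdisj13 : Disjoint I1 I3) (hdisj23 : Disjoint I2 I3)
    (hcover : closure I1 ∪ closure I2 ∪ closure I3 = Set.Icc 0 1)
    (hsmooth : ∀ θ ∈ I1 ∪ I2 ∪ I3, DifferentiableAt ℝ F θ)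
    (ha : 1 < a) (hb : 0 < b) (hab : |Real.log b| < Real.log a)
    (hd1 : ∀ θ ∈ I1, a ≤ |deriv F θ|)
    (hd2 : ∀ θ ∈ I2, b ≤ |deriv F θ|)
    (hd3 : ∀ θ ∈ I3, deriv F θ = 1)
    (h23 : F '' I2 ⊆ I3) (h32 : (F '' I3) ∩ I2 = ∅) (h33 : F '' I3 ≠ I3)
    (θ0 : ℝ) (hθ0 : θ0 ∈ Set.Icc 0 1)
    (horbit : ∀ n : ℕ, F^[n] θ0 ∈ I1 ∪ I2 ∪ I3)
    (L : ℝ)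
    (hL : Filter.Tendsto
      (fun N : ℕ => (1 / (N : ℝ)) * ∑ n ∈ Finset.range (N + 1), Real.log |deriv F (F^[n] θ0)|)
      Filter.atTop (nhds L)) :
    0 < L := by
  classical
  obtain ⟨p3, q3, hpq3, hI3⟩ := hopen3
  -- F is a translation by c on I3
  have hconst : ∀ x ∈ I3, ∀ y ∈ I3, F x - x = F y - y := by
    rw [hI3]
    intro x hx y hy
    have hcvx : Convex ℝ (Set.Ioo p3 q3) := convex_Ioo p3 q3
    have hsm : ∀ z ∈ Set.Ioo p3 q3, DifferentiableAt ℝ F z := by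
      intro z hz; exact hsmooth z (Or.inr (hI3 ▸ hz))
    have hdiff : DifferentiableOn ℝ (fun t => F t - t) (Set.Ioo p3 q3) := fun z hz =>
      ((hsm z hz).sub differentiableAt_id).differentiableWithinAt
    have hzero : ∀ z ∈ Set.Ioo p3 q3,
        fderivWithin ℝ (fun t => F t - t) (Set.Ioo p3 q3) z = 0 := by
      intro z hz
      rw [fderivWithin_of_isOpen isOpen_Ioo hz, ← toSpanSingleton_deriv]
      have h1 : HasDerivAt (fun t => F t - t) (deriv F z - 1) z :=
        ((hsm z hz).hasDerivAt).sub (hasDerivAt_id z)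
      have : deriv (fun t => F t - t) z = 0 := by
        rw [h1.deriv, hd3 z (hI3 ▸ hz)]; ring
      rw [this]; ext w; simp
    exact hcvx.is_const_of_fderivWithin_eq_zero hdiff hzero hx hy
  set m : ℝ := (p3 + q3) / 2 with hm
  have hmI3 : m ∈ I3 := by rw [hI3]; constructor <;> [skip; skip] <;> simp [hm] <;> linarith
  set c : ℝ := F m - m with hcdef
  have hc : ∀ x ∈ I3, F x = x + c := by
    intro x hx
    have := hconst x hx m hmI3
    simp only [hcdef]; linarith
  have hcne : c ≠ 0 := by
    intro h0
    apply h33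
    have : ∀ x ∈ I3, F x = x := by intro x hx; rw [hc x hx, h0, add_zero]
    calc F '' I3 = id '' I3 := Set.image_congr this
    _ = I3 := Set.image_id I3
  have habs : 0 < |c| := abs_pos.mpr hcne
  -- constants
  set K : ℝ := Real.log a - |Real.log b| with hKdef
  have hK : 0 < K := by simp only [hKdef]; linarith
  set Lc : ℝ := (q3 - p3) / |c| with hLcdef
  have hLc : 0 ≤ Lc := div_nonneg (by linarith) habs.le
  set δ : ℝ := K / (3 + Lc) with hδdef
  have hden : 0 < 3 + Lc := by linarith
  have hδ : 0 < δ := div_pos hK hden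
  have hδK : δ * (3 + Lc) = K := div_mul_cancel₀ K (ne_of_gt hden)
  have hloga : 0 < Real.log a := lt_of_le_of_lt (abs_nonneg _) hab
  -- r and V
  set r : ℝ → ℝ := fun x => if 0 < c then (q3 - x) / c else (x - p3) / (-c) with hrdef
  set V : ℝ → ℝ := fun x =>
    if x ∈ I2 then Real.log a - δ else if x ∈ I3 then δ * (1 + r x) else 0 with hVdef
  have hrpos : ∀ x ∈ I3, 0 < r x := by
    intro x hx
    rw [hI3] at hx
    simp only [hrdef]
    split
    · next hcpos => exact div_pos (by linarith [hx.2]) hcpos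
    · next hcneg =>
      have : c < 0 := lt_of_le_of_ne (not_lt.mp hcneg) hcne
      exact div_pos (by linarith [hx.1]) (by linarith)
  have hrle : ∀ x ∈ I3, r x ≤ Lc := by
    intro x hx
    rw [hI3] at hx
    simp only [hrdef, hLcdef]
    split
    · next hcpos =>
      rw [abs_of_pos hcpos]
      exact (div_le_div_iff_of_pos_right hcpos).mpr (by linarith [hx.1])
    · next hcneg =>
      have hcn : c < 0 := lt_of_le_of_ne (not_lt.mp hcneg) hcne
      rw [abs_of_neg hcn]
      exact (div_le_div_iff_of_pos_right (by linarith : (0:ℝ) < -c)).mpr (by linarith [hx.2])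
  have hrshift : ∀ x : ℝ, r (x + c) = r x - 1 := by
    intro x
    simp only [hrdef]
    split
    · next hcpos => field_simp; ring
    · next hcneg =>
      have hcn : c < 0 := lt_of_le_of_ne (not_lt.mp hcneg) hcne
      have : -c ≠ 0 := by intro h; apply hcne; linarith
      field_simp
      ring
  -- values of V on each interval
  have hV1 : ∀ x ∈ I1, V x = 0 := by
    intro x hx
    have h2 : x ∉ I2 := fun h => (Set.disjoint_left.mp hdisj12 hx) h
    have h3 : x ∉ I3 := fun h => (Set.disjoint_left.mp hdisj13 hx) h
    simp [hVdef, h2, h3]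
  have hV2 : ∀ x ∈ I2, V x = Real.log a - δ := by
    intro x hx; simp [hVdef, hx]
  have hV3 : ∀ x ∈ I3, V x = δ * (1 + r x) := by
    intro x hx
    have h2 : x ∉ I2 := fun h => (Set.disjoint_left.mp hdisj23 h) hx
    simp [hVdef, h2, hx]
  have hVmax : δ * (1 + Lc) = K - 2 * δ := by linarith [hδK]
  have hVle : ∀ x ∈ I1 ∪ I2 ∪ I3, V x ≤ Real.log a - δ := by
    intro x hx
    rcases hx with hx | hx
    rcases hx with hx | hx
    · rw [hV1 x hx]
      have : 3 * δ ≤ K := by nlinarith [hδK]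
      simp only [hKdef] at this
      have := abs_nonneg (Real.log b)
      linarith
    · rw [hV2 x hx]
    · rw [hV3 x hx]
      have h1 : δ * (1 + r x) ≤ δ * (1 + Lc) :=
        mul_le_mul_of_nonneg_left (by linarith [hrle x hx]) hδ.le
      have := abs_nonneg (Real.log b)
      simp only [hKdef] at hVmax
      linarith
  have hVnonneg : ∀ x ∈ I1 ∪ I2 ∪ I3, 0 ≤ V x := by
    intro x hx
    rcases hx with hx | hx
    rcases hx with hx | hx
    · rw [hV1 x hx]
    · rw [hV2 x hx]
      have : 3 * δ ≤ K := by nlinarith [hδK]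
      simp only [hKdef] at this
      have := abs_nonneg (Real.log b)
      linarith
    · rw [hV3 x hx]
      have := hrpos x hx
      nlinarith
  -- g bounds
  set g : ℕ → ℝ := fun n => Real.log |deriv F (F^[n] θ0)| with hgdef
  have hstep : ∀ n : ℕ, F^[n + 1] θ0 = F (F^[n] θ0) := fun n =>
    Function.iterate_succ_apply' F n θ0
  -- key inequality
  have hkey : ∀ n : ℕ, V (F^[n + 1] θ0) + δ ≤ V (F^[n] θ0) + g n := by
    intro n
    set x := F^[n] θ0 with hxdef
    have hx : x ∈ I1 ∪ I2 ∪ I3 := horbit n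
    have hy : F x ∈ I1 ∪ I2 ∪ I3 := by rw [← hstep n]; exact horbit (n + 1)
    rw [hstep n]
    rcases hx with hx1 | hx3
    rcases hx1 with hx1 | hx2
    · -- x ∈ I1
      have hg : Real.log a ≤ g n := by
        simp only [hgdef]
        exact Real.log_le_log (by linarith) (hd1 x hx1)
      have := hVle (F x) hy
      rw [hV1 x hx1]
      linarith
    · -- x ∈ I2
      have hFx3 : F x ∈ I3 := h23 ⟨x, hx2, rfl⟩
      have hg : Real.log b ≤ g n := by
        simp only [hgdef]
        exact Real.log_le_log hb (hd2 x hx2)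
      rw [hV2 x hx2, hV3 _ hFx3]
      have h1 : δ * (1 + r (F x)) ≤ δ * (1 + Lc) :=
        mul_le_mul_of_nonneg_left (by linarith [hrle _ hFx3]) hδ.le
      have h2 : -|Real.log b| ≤ Real.log b := neg_abs_le _
      simp only [hKdef] at hVmax
      linarith
    · -- x ∈ I3
      have hg : g n = 0 := by
        simp only [hgdef, ← hxdef, hd3 x hx3, abs_one, Real.log_one]
      have hFx : F x = x + c := hc x hx3
      have hFxnot2 : F x ∉ I2 := by
        intro h2
        have : F x ∈ (F '' I3) ∩ I2 := ⟨⟨x, hx3, rfl⟩, h2⟩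
        rw [h32] at this
        exact this
      rcases hy with hy1 | hy3
      rcases hy1 with hy1 | hy2
      · -- F x ∈ I1
        rw [hV1 _ hy1, hV3 x hx3, hg]
        have := hrpos x hx3
        nlinarith
      · exact absurd hy2 hFxnot2
      · -- F x ∈ I3
        rw [hV3 _ hy3, hV3 x hx3, hg, hFx, hrshift x]
        ring_nf
        linarith
  -- summation
  have hsum : ∀ N : ℕ, δ * (N + 1) + V (F^[N + 1] θ0) - V θ0 ≤
      ∑ n ∈ Finset.range (N + 1), g n := by
    intro N
    induction N with
    | zero =>
      have := hkey 0
      simp only [Function.iterate_zero_apply] at this ⊢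
      rw [Finset.sum_range_one]
      push_cast
      linarith
    | succ N ih =>
      have hk := hkey (N + 1)
      rw [Finset.sum_range_succ]
      push_cast
      push_cast at ih
      linarith
  have hV0 : 0 ≤ V θ0 := by
    have := hVnonneg θ0 (by simpa using horbit 0)
    simpa using this
  -- lower bound for the averages
  have hlow : ∀ N : ℕ, 1 ≤ N →
      δ - V θ0 * (1 / (N : ℝ)) ≤
        (1 / (N : ℝ)) * ∑ n ∈ Finset.range (N + 1), g n := by
    intro N hN
    have hNpos : (0 : ℝ) < N := by exact_mod_cast hN
    have h1 : δ * (N + 1) - V θ0 ≤ ∑ n ∈ Finset.range (N + 1), g n := by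
      have := hsum N
      have h2 := hVnonneg _ (horbit (N + 1))
      linarith
    have hinv : (0:ℝ) < 1 / (N : ℝ) := by positivity
    have hNne : (N : ℝ) ≠ 0 := ne_of_gt hNpos
    have key : (1 / (N : ℝ)) * (δ * (N + 1) - V θ0) ≤
        (1 / (N : ℝ)) * ∑ n ∈ Finset.range (N + 1), g n :=
      mul_le_mul_of_nonneg_left h1 hinv.le
    have expand : (1 / (N : ℝ)) * (δ * (N + 1) - V θ0)
        = δ + δ * (1 / (N : ℝ)) - V θ0 * (1 / (N : ℝ)) := by
      field_simp
    rw [expand] at key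
    nlinarith [mul_nonneg hδ.le hinv.le]
  -- pass to the limit
  have htend : Filter.Tendsto (fun N : ℕ => δ - V θ0 * (1 / (N : ℝ)))
      Filter.atTop (nhds δ) := by
    have h0 : Filter.Tendsto (fun N : ℕ => (1 / (N : ℝ))) Filter.atTop (nhds 0) :=
      tendsto_one_div_atTop_nhds_zero_nat
    have := (tendsto_const_nhds (x := δ) (f := Filter.atTop (α := ℕ))).sub
      ((tendsto_const_nhds (x := V θ0) (f := Filter.atTop (α := ℕ))).mul h0)
    simpa using this
  have hδL : δ ≤ L :=
    le_of_tendsto_of_tendsto htend hL (Filter.eventually_atTop.mpr ⟨1, fun N hN => hlow N hN⟩)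
  linarith
end

section
/- For the slow ODE with saturating exponential ramp (b > 0), where g(εt) = (1 - e^{-bεt})(a/b - y_i) so that g^{-1}(y) = -(1/b) ln(1 + y/(y_i - a/b)), the integral condition 0 = ∫_{y_i}^{y_j} (d/dy g^{-1}(y - y_i)) · y dy is equivalent to the relation y_i - y_j = (a/b) · ln((b·y_j - a)/(b·y_i - a)). -/
/-- For the saturating-exponential ramp (`b > 0`), the integral
jump-up condition is equivalent to `y_i - y_j = (a/b) · ln((b y_j - a)/(b y_i - a))`. -/
theorem stmt_4 (a b ε yi yj : ℝ) (ha : 0 < a) (hb : 0 < b) (hε : 0 < ε)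
    (hyi : yi < 0) (hyj : 0 < yj)
    (hi : b * yi - a < 0) (hj : b * yj - a < 0) :
    ((0 : ℝ) = ∫ y in yi..yj, y / (b * (1 + (y - yi) / (yi - a / b)) * (a / b - yi))) ↔
      yi - yj = (a / b) * Real.log ((b * yj - a) / (b * yi - a)) := by
  have hle : yi ≤ yj := le_of_lt (lt_trans hyi hyj)
  have hab : 0 < a / b := div_pos ha hb
  have hc : yi - a / b ≠ 0 := by linarith
  have hden : ∀ y : ℝ, b * (1 + (y - yi) / (yi - a / b)) * (a / b - yi) = a - b * y := by
    intro y
    have h1 : 1 + (y - yi) / (yi - a / b) = (y - a / b) / (yi - a / b) := by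
      rw [eq_div_iff hc, add_mul, div_mul_cancel₀ _ hc]; ring
    have h2 : (y - a / b) / (yi - a / b) * (a / b - yi) = -(y - a / b) := by
      rw [div_mul_eq_mul_div, div_eq_iff hc]; ring
    calc b * (1 + (y - yi) / (yi - a / b)) * (a / b - yi)
        = b * ((y - a / b) / (yi - a / b) * (a / b - yi)) := by rw [h1]; ring
      _ = b * -(y - a / b) := by rw [h2]
      _ = a - b * y := by field_simp; ring
  have hpos : ∀ y ∈ Set.uIcc yi yj, 0 < a - b * y := by
    intro y hy
    rw [Set.uIcc_of_le hle] at hy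
    have : b * y ≤ b * yj := mul_le_mul_of_nonneg_left hy.2 hb.le
    linarith
  set F : ℝ → ℝ := fun y => -y / b - (a / b ^ 2) * Real.log (a - b * y) with hF
  have hderiv : ∀ y ∈ Set.uIcc yi yj,
      HasDerivAt F (y / (b * (1 + (y - yi) / (yi - a / b)) * (a / b - yi))) y := by
    intro y hy
    have hp := hpos y hy
    have h1 : HasDerivAt (fun y : ℝ => a - b * y) (-b) y := by
      simpa using ((hasDerivAt_id y).const_mul b).const_sub a
    have h2 : HasDerivAt (fun y : ℝ => Real.log (a - b * y)) ((a - b * y)⁻¹ * -b) y :=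
      by have := (Real.hasDerivAt_log hp.ne').comp y h1; exact this
    have h3 : HasDerivAt F (-1 / b - (a / b ^ 2) * ((a - b * y)⁻¹ * -b)) y := by
      have h4 : HasDerivAt (fun y : ℝ => -y / b) (-1 / b) y := by
        simpa [div_eq_mul_inv] using ((hasDerivAt_id y).neg.mul_const b⁻¹)
      exact h4.sub (h2.const_mul _)
    convert h3 using 1
    rw [hden y]
    rw [div_eq_iff hp.ne']
    have h := mul_inv_cancel₀ hp.ne'
    have hb1 := mul_inv_cancel₀ hb.ne'
    linear_combination (-(y + a * b⁻¹)) * hb1 + (-(a * b⁻¹ * (b * b⁻¹))) * h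
  have hcont : IntervalIntegrable
      (fun y => y / (b * (1 + (y - yi) / (yi - a / b)) * (a / b - yi)))
      MeasureTheory.volume yi yj := by
    apply ContinuousOn.intervalIntegrable
    apply ContinuousOn.div continuousOn_id
    · fun_prop
    · intro y hy
      rw [hden y]
      exact (hpos y hy).ne'
  have hint : (∫ y in yi..yj, y / (b * (1 + (y - yi) / (yi - a / b)) * (a / b - yi)))
      = F yj - F yi :=
    intervalIntegral.integral_eq_sub_of_hasDerivAt hderiv hcont
  rw [hint]
  have hpi : 0 < a - b * yi := by linarith
  have hpj : 0 < a - b * yj := by linarith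
  have hlog : Real.log ((b * yj - a) / (b * yi - a))
      = Real.log (a - b * yj) - Real.log (a - b * yi) := by
    have : (b * yj - a) / (b * yi - a) = (a - b * yj) / (a - b * yi) := by
      rw [div_eq_div_iff (by linarith) (by linarith)]; ring
    rw [this, Real.log_div hpj.ne' hpi.ne']
  rw [hlog, hF]
  simp only
  constructor
  · intro h
    field_simp at h ⊢
    nlinarith [h]
  · intro h
    field_simp at h ⊢
    nlinarith [h]
end
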